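/- arXiv:2408.16687 — 2 statements merged into one kernel-verified Lean document; each statement's English description precedes it below -/
import Mathlib

section
/- Decorrelation of the noise operator: for X a d-partite (q,γ)-product, r ∈ ℝ^d, and any permutation π of [d], ‖T_r f − T^{π(1)}_{r_{π(1)}} ⋯ T^{π(d)}_{r_{π(d)}} f‖_q ≤ c_{d,r} γ ‖f‖_q with c_{d,r} = d³ ∑_{S⊆[d]} |r_S ∏_{i∉S}(1−r_i)|. -/
open Finset BigOperators

/-- Conditional expectation operator `E_T` on a `d`-partite space:
`E_T f (x) = E[f(y) | y_T = x_T]` under the (finitely supported) measure `μ`. -/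
noncomputable def projE {d : ℕ} {Ω : Type} [Fintype Ω] [DecidableEq Ω]
    (μ : (Fin d → Ω) → ℝ) (T : Finset (Fin d))
    (f : (Fin d → Ω) → ℝ) (x : Fin d → Ω) : ℝ :=
  (∑ y : Fin d → Ω, if ∀ i ∈ T, y i = x i then μ y * f y else 0) /
  (∑ y : Fin d → Ω, if ∀ i ∈ T, y i = x i then μ y else 0)

/-- Efron–Stein component `f^{=S} = ∑_{T ⊆ S} (-1)^{|S|-|T|} E_T f`. -/
noncomputable def esComp {d : ℕ} {Ω : Type} [Fintype Ω] [DecidableEq Ω]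
    (μ : (Fin d → Ω) → ℝ) (S : Finset (Fin d))
    (f : (Fin d → Ω) → ℝ) : (Fin d → Ω) → ℝ :=
  fun x => ∑ T ∈ S.powerset, (-1 : ℝ) ^ (S.card - T.card) * projE μ T f x

/-- `L^q` norm with respect to the probability mass function `μ`. -/
noncomputable def pnorm {α : Type} [Fintype α] (μ : α → ℝ) (q : ℝ) (f : α → ℝ) : ℝ :=
  (∑ x, μ x * |f x| ^ q) ^ (1 / q)

/-- Conditional (link) measure obtained from `μ` by conditioning the coordinates
in `R` to agree with `z`. -/
noncomputable def condMeasure {d : ℕ} {Ω : Type} [Fintype Ω] [DecidableEq Ω]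
    (μ : (Fin d → Ω) → ℝ) (R : Finset (Fin d)) (z : Fin d → Ω) :
    (Fin d → Ω) → ℝ :=
  fun y => (if ∀ i ∈ R, y i = z i then μ y else 0) /
    (∑ y' : Fin d → Ω, if ∀ i ∈ R, y' i = z i then μ y' else 0)

/-- Expectation with respect to the mass function `μ`. -/
noncomputable def expect {α : Type} [Fintype α] (μ : α → ℝ) (f : α → ℝ) : ℝ :=
  ∑ x, μ x * f x

/-- `X` is a `(q,γ)`-product: in every link of codimension at least `2`
(conditioning the coordinates in `R` on `z`), for every pair of distinct colors
`i, j ∉ R`, the bipartite walk from color `i` to color `j` is a `q`-norm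
expander: `‖A^τ_{i,j} g − Π^τ_{i,j} g‖_q ≤ γ ‖g‖_q` for every function `g` of
the `i`-th coordinate. -/
def IsQGammaProduct {d : ℕ} {Ω : Type} [Fintype Ω] [DecidableEq Ω]
    (μ : (Fin d → Ω) → ℝ) (q γ : ℝ) : Prop :=
  ∀ (R : Finset (Fin d)) (z : Fin d → Ω), R.card + 2 ≤ d →
    ∀ i j : Fin d, i ∉ R → j ∉ R → i ≠ j →
      ∀ g : (Fin d → Ω) → ℝ, (∀ x y, x i = y i → g x = g y) →
        pnorm (condMeasure μ R z) q
            (fun x => projE (condMeasure μ R z) {j} g x - expect (condMeasure μ R z) g)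
          ≤ γ * pnorm (condMeasure μ R z) q g

/-- The vector-valued noise operator
`T_r f = ∑_{S⊆[d]} (∏_{i∈S} r_i)(∏_{i∉S}(1−r_i)) E_S f`. -/
noncomputable def noiseT {d : ℕ} {Ω : Type} [Fintype Ω] [DecidableEq Ω]
    (μ : (Fin d → Ω) → ℝ) (r : Fin d → ℝ) (f : (Fin d → Ω) → ℝ) :
    (Fin d → Ω) → ℝ :=
  fun x => ∑ S ∈ (univ : Finset (Fin d)).powerset,
    (∏ i ∈ S, r i) * (∏ i ∈ Sᶜ, (1 - r i)) * projE μ S f x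

/-- Single-coordinate noise operator `T^i_c = c·I + (1−c)·E_{[d]\{i}}`. -/
noncomputable def coordT {d : ℕ} {Ω : Type} [Fintype Ω] [DecidableEq Ω]
    (μ : (Fin d → Ω) → ℝ) (i : Fin d) (c : ℝ) (f : (Fin d → Ω) → ℝ) :
    (Fin d → Ω) → ℝ :=
  fun x => c * f x + (1 - c) * projE μ (univ.erase i) f x

/-- The composition `T^{π(1)}_{r_{π(1)}} ⋯ T^{π(d)}_{r_{π(d)}} f` of the
single-coordinate noise operators in the order prescribed by `π`. -/
noncomputable def seqT {d : ℕ} {Ω : Type} [Fintype Ω] [DecidableEq Ω]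
    (μ : (Fin d → Ω) → ℝ) (r : Fin d → ℝ) (π : Equiv.Perm (Fin d))
    (f : (Fin d → Ω) → ℝ) : (Fin d → Ω) → ℝ :=
  (List.ofFn fun k : Fin d => π k).foldr (fun i g => coordT μ i (r i) g) f

set_option linter.unusedSectionVars false

namespace ND


variable {d : ℕ} {Ω : Type} [Fintype Ω] [DecidableEq Ω]

def Meas (T : Finset (Fin d)) (f : (Fin d → Ω) → ℝ) : Prop :=
  ∀ x y : Fin d → Ω, (∀ i ∈ T, x i = y i) → f x = f y

lemma Meas.mono {T T' : Finset (Fin d)} {f : (Fin d → Ω) → ℝ} (h : Meas T f)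
    (hTT : T ⊆ T') : Meas T' f :=
  fun x y hxy => h x y fun i hi => hxy i (hTT hi)

noncomputable def den (μ : (Fin d → Ω) → ℝ) (T : Finset (Fin d)) (x : Fin d → Ω) : ℝ :=
  ∑ y : Fin d → Ω, if ∀ i ∈ T, y i = x i then μ y else 0

lemma num_eq (μ : (Fin d → Ω) → ℝ) (T : Finset (Fin d)) (f : (Fin d → Ω) → ℝ)
    (x : Fin d → Ω) :
    (∑ y : Fin d → Ω, if ∀ i ∈ T, y i = x i then μ y * f y else 0)
      = ∑ y : Fin d → Ω, (if ∀ i ∈ T, y i = x i then μ y else 0) * f y := by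
  refine Finset.sum_congr rfl fun y _ => ?_
  split <;> simp

lemma projE_def (μ : (Fin d → Ω) → ℝ) (T : Finset (Fin d)) (f : (Fin d → Ω) → ℝ)
    (x : Fin d → Ω) : projE μ T f x =
    (∑ y : Fin d → Ω, (if ∀ i ∈ T, y i = x i then μ y else 0) * f y) / den μ T x := by
  rw [projE, num_eq]; rfl

variable {μ : (Fin d → Ω) → ℝ} {T : Finset (Fin d)} {x : Fin d → Ω}

lemma den_nonneg (hμ0 : ∀ x, 0 ≤ μ x) : 0 ≤ den μ T x := by
  refine Finset.sum_nonneg fun y _ => ?_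
  split
  · exact hμ0 y
  · exact le_refl 0

lemma mu_le_den (hμ0 : ∀ x, 0 ≤ μ x) : μ x ≤ den μ T x := by
  have h1 : μ x = if ∀ i ∈ T, x i = x i then μ x else 0 := by simp
  rw [h1]
  refine Finset.single_le_sum (f := fun y => if ∀ i ∈ T, y i = x i then μ y else 0)
    (fun y _ => ?_) (Finset.mem_univ x)
  show (0:ℝ) ≤ if ∀ i ∈ T, y i = x i then μ y else 0
  split
  · exact hμ0 y
  · exact le_refl 0

lemma den_pos (hμ0 : ∀ x, 0 ≤ μ x) (hx : μ x ≠ 0) : 0 < den μ T x :=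
  lt_of_lt_of_le (lt_of_le_of_ne (hμ0 x) (Ne.symm hx)) (mu_le_den hμ0)

lemma projE_congr_ae {f g : (Fin d → Ω) → ℝ} (h : ∀ y, μ y ≠ 0 → f y = g y) :
    projE μ T f x = projE μ T g x := by
  rw [projE_def, projE_def]
  congr 1
  refine Finset.sum_congr rfl fun y _ => ?_
  rcases eq_or_ne (μ y) 0 with h0 | h0
  · split
    · rw [h0]; simp
    · simp
  · rw [h y h0]

lemma projE_sub (μ : (Fin d → Ω) → ℝ) (T : Finset (Fin d)) (f g : (Fin d → Ω) → ℝ)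
    (x : Fin d → Ω) :
    projE μ T (fun y => f y - g y) x = projE μ T f x - projE μ T g x := by
  rw [projE_def, projE_def, projE_def, div_sub_div_same]
  congr 1
  rw [← Finset.sum_sub_distrib]
  refine Finset.sum_congr rfl fun y _ => ?_
  ring

lemma projE_smul (μ : (Fin d → Ω) → ℝ) (T : Finset (Fin d)) (c : ℝ) (f : (Fin d → Ω) → ℝ)
    (x : Fin d → Ω) :
    projE μ T (fun y => c * f y) x = c * projE μ T f x := by
  rw [projE_def, projE_def, ← mul_div_assoc, Finset.mul_sum]
  congr 1
  refine Finset.sum_congr rfl fun y _ => ?_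
  ring

lemma projE_sum {ι : Type} (μ : (Fin d → Ω) → ℝ) (T : Finset (Fin d)) (s : Finset ι)
    (F : ι → (Fin d → Ω) → ℝ) (x : Fin d → Ω) :
    projE μ T (fun y => ∑ i ∈ s, F i y) x = ∑ i ∈ s, projE μ T (F i) x := by
  simp only [projE_def, ← Finset.sum_div]
  congr 1
  rw [Finset.sum_comm]
  refine Finset.sum_congr rfl fun y _ => ?_
  rw [Finset.mul_sum]

/-- `projE μ T f` depends only on coordinates in `T`. -/
lemma projE_meas (μ : (Fin d → Ω) → ℝ) (T : Finset (Fin d)) (f : (Fin d → Ω) → ℝ) :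
    Meas T (projE μ T f) := by
  intro x y hxy
  have hiff : ∀ u : Fin d → Ω, (∀ i ∈ T, u i = x i) ↔ (∀ i ∈ T, u i = y i) := by
    intro u
    constructor
    · intro h i hi; rw [h i hi, hxy i hi]
    · intro h i hi; rw [h i hi, ← hxy i hi]
  unfold projE
  congr 1
  · exact Finset.sum_congr rfl fun u _ => by rw [if_congr (hiff u) rfl rfl]
  · exact Finset.sum_congr rfl fun u _ => by rw [if_congr (hiff u) rfl rfl]

/-- On points of positive denominator, `projE μ T` fixes `T`-measurable functions. -/
lemma projE_self {f : (Fin d → Ω) → ℝ} (hf : Meas T f) (hD : den μ T x ≠ 0) :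
    projE μ T f x = f x := by
  rw [projE_def]
  have : (∑ y : Fin d → Ω, (if ∀ i ∈ T, y i = x i then μ y else 0) * f y)
      = (∑ y : Fin d → Ω, (if ∀ i ∈ T, y i = x i then μ y else 0)) * f x := by
    rw [Finset.sum_mul]
    refine Finset.sum_congr rfl fun y _ => ?_
    split_ifs with h
    · rw [hf y x h]
    · simp
  rw [this]
  have hD' : (∑ y : Fin d → Ω, if ∀ i ∈ T, y i = x i then μ y else 0) = den μ T x := rfl
  rw [hD']; field_simp


lemma den_congr (x x' : Fin d → Ω) (h : ∀ i ∈ T, x i = x' i) :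
    den μ T x = den μ T x' := by
  refine Finset.sum_congr rfl fun u _ => ?_
  refine if_congr (forall_congr' fun i => forall_congr' fun hi => ?_) rfl rfl
  rw [h i hi]

/-- Law of total expectation (exact, for arbitrary nonneg `μ`). -/
lemma totExp (hμ0 : ∀ x, 0 ≤ μ x) (T : Finset (Fin d)) (g : (Fin d → Ω) → ℝ) :
    ∑ x : Fin d → Ω, μ x * projE μ T g x = ∑ x : Fin d → Ω, μ x * g x := by
  have h1 : ∀ x : Fin d → Ω, μ x * projE μ T g x
      = ∑ y : Fin d → Ω, (if ∀ i ∈ T, y i = x i then μ y * g y else 0) * (μ x / den μ T x) := by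
    intro x
    unfold projE den
    rw [show ∀ N D : ℝ, μ x * (N / D) = N * (μ x / D) from fun N D => by ring,
      Finset.sum_mul]
  calc ∑ x : Fin d → Ω, μ x * projE μ T g x
      = ∑ x : Fin d → Ω, ∑ y : Fin d → Ω,
          (if ∀ i ∈ T, y i = x i then μ y * g y else 0) * (μ x / den μ T x) := by
        exact Finset.sum_congr rfl fun x _ => h1 x
    _ = ∑ y : Fin d → Ω, ∑ x : Fin d → Ω,
          (if ∀ i ∈ T, y i = x i then μ y * g y else 0) * (μ x / den μ T x) :=
        Finset.sum_comm
    _ = ∑ y : Fin d → Ω, μ y * g y := by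
        refine Finset.sum_congr rfl fun y _ => ?_
        rcases eq_or_ne (μ y) 0 with h0 | h0
        · simp [h0]
        · have hdy : den μ T y ≠ 0 := ne_of_gt (den_pos hμ0 h0)
          have hterm : ∀ x : Fin d → Ω,
              (if ∀ i ∈ T, y i = x i then μ y * g y else 0) * (μ x / den μ T x)
              = (μ y * g y / den μ T y) * (if ∀ i ∈ T, y i = x i then μ x else 0) := by
            intro x
            split_ifs with hc
            · rw [den_congr (μ := μ) (T := T) x y (fun i hi => (hc i hi).symm)]
              ring
            · ring
          rw [Finset.sum_congr rfl fun x _ => hterm x, ← Finset.mul_sum]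
          have hsum : (∑ x : Fin d → Ω, if ∀ i ∈ T, y i = x i then μ x else 0) = den μ T y := by
            refine Finset.sum_congr rfl fun u _ => ?_
            refine if_congr (forall_congr' fun i => forall_congr' fun hi => eq_comm) rfl rfl
          rw [hsum]
          field_simp
  
/-- Tower property, exact and pointwise: for `A ⊆ B`, `E_A E_B f = E_A f`. -/
lemma tower (hμ0 : ∀ x, 0 ≤ μ x) {A B : Finset (Fin d)} (hAB : A ⊆ B)
    (f : (Fin d → Ω) → ℝ) (x : Fin d → Ω) :
    projE μ A (projE μ B f) x = projE μ A f x := by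
  have hμ'0 : ∀ y, 0 ≤ (fun y => if ∀ i ∈ A, y i = x i then μ y else 0) y := by
    intro y
    dsimp only
    split
    · exact hμ0 y
    · exact le_refl 0
  set μ' : (Fin d → Ω) → ℝ := fun y => if ∀ i ∈ A, y i = x i then μ y else 0 with hμ'
  have hproj : ∀ y : Fin d → Ω, μ' y ≠ 0 → projE μ B f y = projE μ' B f y := by
    intro y hy
    have hyA : ∀ i ∈ A, y i = x i := by
      by_contra hcon
      apply hy
      simp only [hμ', if_neg hcon]
    have hcollapse : ∀ u : Fin d → Ω, (∀ i ∈ B, u i = y i) → (∀ i ∈ A, u i = x i) := by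
      intro u hu i hi
      rw [hu i (hAB hi), hyA i hi]
    unfold projE
    congr 1
    · refine Finset.sum_congr rfl fun u _ => ?_
      split_ifs with hc
      · simp only [hμ', if_pos (hcollapse u hc)]
      · rfl
    · refine Finset.sum_congr rfl fun u _ => ?_
      split_ifs with hc
      · simp only [hμ', if_pos (hcollapse u hc)]
      · rfl
  have hnum : (∑ y : Fin d → Ω, if ∀ i ∈ A, y i = x i then μ y * projE μ B f y else 0)
      = (∑ y : Fin d → Ω, if ∀ i ∈ A, y i = x i then μ y * f y else 0) := by
    have e1 : (∑ y : Fin d → Ω, if ∀ i ∈ A, y i = x i then μ y * projE μ B f y else 0)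
        = ∑ y : Fin d → Ω, μ' y * projE μ' B f y := by
      refine Finset.sum_congr rfl fun y _ => ?_
      by_cases hc : ∀ i ∈ A, y i = x i
      · rw [if_pos hc]
        have hμ'y : μ' y = μ y := by simp only [hμ', if_pos hc]
        rcases eq_or_ne (μ' y) 0 with h0 | h0
        · rw [h0, zero_mul]
          rw [hμ'y] at h0
          rw [h0, zero_mul]
        · rw [← hproj y h0, hμ'y]
      · rw [if_neg hc]
        have h0 : μ' y = 0 := by simp only [hμ', if_neg hc]
        rw [h0, zero_mul]
    rw [e1, totExp hμ'0 B f]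
    refine Finset.sum_congr rfl fun y _ => ?_
    simp only [hμ']
    split <;> simp
  rw [show projE μ A (projE μ B f) x
      = (∑ y : Fin d → Ω, if ∀ i ∈ A, y i = x i then μ y * projE μ B f y else 0) / den μ A x
    from rfl, hnum]
  rfl


section pnormlem

variable {q : ℝ}

lemma pnorm_nonneg {α : Type} [Fintype α] (μ : α → ℝ) (q : ℝ) (f : α → ℝ)
    (hμ0 : ∀ x, 0 ≤ μ x) : 0 ≤ pnorm μ q f := by
  refine Real.rpow_nonneg (Finset.sum_nonneg fun x _ => ?_) _
  exact mul_nonneg (hμ0 x) (Real.rpow_nonneg (abs_nonneg _) _)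

lemma pnorm_congr_ae {α : Type} [Fintype α] {μ : α → ℝ} {f g : α → ℝ}
    (h : ∀ x, μ x ≠ 0 → f x = g x) : pnorm μ q f = pnorm μ q g := by
  unfold pnorm
  congr 1
  refine Finset.sum_congr rfl fun x _ => ?_
  rcases eq_or_ne (μ x) 0 with h0 | h0
  · rw [h0, zero_mul, zero_mul]
  · rw [h x h0]

lemma pnorm_zero {α : Type} [Fintype α] (μ : α → ℝ) (hq0 : q ≠ 0) :
    pnorm μ q (fun _ => (0 : ℝ)) = 0 := by
  unfold pnorm
  simp only [abs_zero, Real.zero_rpow hq0, mul_zero, Finset.sum_const_zero]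
  exact Real.zero_rpow (one_div_ne_zero hq0)

lemma pnorm_ae_zero {α : Type} [Fintype α] {μ : α → ℝ} {f : α → ℝ}
    (hq0 : q ≠ 0) (h : ∀ x, μ x ≠ 0 → f x = 0) : pnorm μ q f = 0 := by
  rw [pnorm_congr_ae (g := fun _ => (0:ℝ)) h]
  exact pnorm_zero μ hq0

lemma pnorm_sub_comm {α : Type} [Fintype α] (μ : α → ℝ) (q : ℝ) (f g : α → ℝ) :
    pnorm μ q (fun x => f x - g x) = pnorm μ q (fun x => g x - f x) := by
  unfold pnorm
  congr 1
  refine Finset.sum_congr rfl fun x _ => ?_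
  rw [abs_sub_comm]

/-- weight absorption: `pnorm μ q f = ‖ μ^{1/q} f ‖_q` (unweighted). -/
lemma pnorm_absorb {α : Type} [Fintype α] (μ : α → ℝ) (hμ0 : ∀ x, 0 ≤ μ x)
    (hq0 : 0 < q) (f : α → ℝ) :
    pnorm μ q f = (∑ x, |μ x ^ (1/q) * f x| ^ q) ^ (1/q) := by
  unfold pnorm
  congr 1
  refine Finset.sum_congr rfl fun x _ => ?_
  rw [abs_mul, abs_of_nonneg (Real.rpow_nonneg (hμ0 x) _),
    Real.mul_rpow (Real.rpow_nonneg (hμ0 x) _) (abs_nonneg _),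
    ← Real.rpow_mul (hμ0 x), one_div_mul_cancel (ne_of_gt hq0), Real.rpow_one]

lemma pnorm_add_le {α : Type} [Fintype α] (μ : α → ℝ) (hμ0 : ∀ x, 0 ≤ μ x)
    (hq : 1 ≤ q) (f g : α → ℝ) :
    pnorm μ q (fun x => f x + g x) ≤ pnorm μ q f + pnorm μ q g := by
  have hq0 : 0 < q := lt_of_lt_of_le one_pos hq
  rw [pnorm_absorb μ hμ0 hq0, pnorm_absorb μ hμ0 hq0 f, pnorm_absorb μ hμ0 hq0 g]
  have := Real.Lp_add_le (Finset.univ : Finset α)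
    (fun x => μ x ^ (1/q) * f x) (fun x => μ x ^ (1/q) * g x) hq
  refine le_trans (le_of_eq ?_) this
  congr 1
  refine Finset.sum_congr rfl fun x _ => ?_
  rw [mul_add]

lemma pnorm_smul {α : Type} [Fintype α] (μ : α → ℝ) (hμ0 : ∀ x, 0 ≤ μ x)
    (hq0 : 0 < q) (c : ℝ) (f : α → ℝ) :
    pnorm μ q (fun x => c * f x) = |c| * pnorm μ q f := by
  unfold pnorm
  have h1 : ∀ x : α, μ x * |c * f x| ^ q = |c| ^ q * (μ x * |f x| ^ q) := by
    intro x
    rw [abs_mul, Real.mul_rpow (abs_nonneg c) (abs_nonneg (f x))]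
    ring
  rw [Finset.sum_congr rfl fun x _ => h1 x, ← Finset.mul_sum,
    Real.mul_rpow (Real.rpow_nonneg (abs_nonneg c) q)
      (Finset.sum_nonneg fun x _ =>
        mul_nonneg (hμ0 x) (Real.rpow_nonneg (abs_nonneg _) _)),
    ← Real.rpow_mul (abs_nonneg c), mul_one_div_cancel (ne_of_gt hq0), Real.rpow_one]

lemma pnorm_sum_le {α ι : Type} [Fintype α] (μ : α → ℝ) (hμ0 : ∀ x, 0 ≤ μ x)
    (hq : 1 ≤ q) (s : Finset ι) (F : ι → α → ℝ) :
    pnorm μ q (fun x => ∑ i ∈ s, F i x) ≤ ∑ i ∈ s, pnorm μ q (F i) := by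
  classical
  have hq0 : q ≠ 0 := ne_of_gt (lt_of_lt_of_le one_pos hq)
  induction s using Finset.induction with
  | empty =>
      simp only [Finset.sum_empty]
      rw [show (fun _ : α => (0:ℝ)) = (fun _ : α => (0:ℝ)) from rfl]
      exact le_of_eq (pnorm_zero μ hq0)
  | @insert a s ha ih =>
      rw [Finset.sum_insert ha]
      refine le_trans (le_trans (le_of_eq ?_)
        (pnorm_add_le μ hμ0 hq (F a) (fun x => ∑ i ∈ s, F i x))) ?_
      · congr 1
        funext x
        rw [Finset.sum_insert ha]
      · exact add_le_add le_rfl ih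

lemma pnorm_triangle_sub {α : Type} [Fintype α] (μ : α → ℝ) (hμ0 : ∀ x, 0 ≤ μ x)
    (hq : 1 ≤ q) (f g h : α → ℝ) :
    pnorm μ q (fun x => f x - h x) ≤
      pnorm μ q (fun x => f x - g x) + pnorm μ q (fun x => g x - h x) := by
  refine le_trans (le_of_eq ?_) (pnorm_add_le μ hμ0 hq _ _)
  congr 1
  funext x
  ring

end pnormlem

/-- pointwise conditional Jensen: `|E_T f x| ^ q ≤ E_T (|f|^q) x`. -/
lemma projE_jensen (hμ0 : ∀ x, 0 ≤ μ x) {q : ℝ} (hq : 1 ≤ q)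
    (f : (Fin d → Ω) → ℝ) (x : Fin d → Ω) :
    |projE μ T f x| ^ q ≤ projE μ T (fun y => |f y| ^ q) x := by
  have hq0 : q ≠ 0 := ne_of_gt (lt_of_lt_of_le one_pos hq)
  rcases eq_or_ne (den μ T x) 0 with hD | hD
  · rw [projE_def, projE_def, hD, div_zero, div_zero, abs_zero, Real.zero_rpow hq0]
  · set w : (Fin d → Ω) → ℝ := fun y => (if ∀ i ∈ T, y i = x i then μ y else 0) / den μ T x
      with hw
    have hw0 : ∀ y, 0 ≤ w y := by
      intro y
      refine div_nonneg ?_ (den_nonneg hμ0)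
      split
      · exact hμ0 y
      · exact le_refl 0
    have hw1 : ∑ y : Fin d → Ω, w y = 1 := by
      simp only [hw]
      rw [← Finset.sum_div]
      exact div_self hD
    have hrep : ∀ g : (Fin d → Ω) → ℝ, projE μ T g x = ∑ y : Fin d → Ω, w y * g y := by
      intro g
      rw [projE_def, Finset.sum_div]
      refine Finset.sum_congr rfl fun y _ => ?_
      simp only [hw]
      ring
    rw [hrep f, hrep (fun y => |f y| ^ q)]
    have step1 : |∑ y : Fin d → Ω, w y * f y| ≤ ∑ y : Fin d → Ω, w y * |f y| := by
      refine le_trans (Finset.abs_sum_le_sum_abs _ _) (le_of_eq ?_)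
      refine Finset.sum_congr rfl fun y _ => ?_
      rw [abs_mul, abs_of_nonneg (hw0 y)]
    have step2 : (∑ y : Fin d → Ω, w y * |f y|) ^ q ≤ ∑ y : Fin d → Ω, w y * |f y| ^ q := by
      have := (convexOn_rpow hq).map_sum_le (t := Finset.univ) (w := w)
        (p := fun y => |f y|) (fun y _ => hw0 y) hw1 (fun y _ => Set.mem_Ici.2 (abs_nonneg _))
      simpa only [smul_eq_mul] using this
    refine le_trans ?_ step2
    refine Real.rpow_le_rpow (abs_nonneg _) step1 (le_trans zero_le_one hq)
  
/-- Contraction: `‖E_T f‖_q ≤ ‖f‖_q`. -/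
lemma projE_contraction (hμ0 : ∀ x, 0 ≤ μ x) {q : ℝ} (hq : 1 ≤ q)
    (T : Finset (Fin d)) (f : (Fin d → Ω) → ℝ) :
    pnorm μ q (projE μ T f) ≤ pnorm μ q f := by
  unfold pnorm
  refine Real.rpow_le_rpow (Finset.sum_nonneg fun x _ =>
    mul_nonneg (hμ0 x) (Real.rpow_nonneg (abs_nonneg _) _)) ?_
    (le_of_lt (one_div_pos.2 (lt_of_lt_of_le one_pos hq)))
  calc ∑ x : Fin d → Ω, μ x * |projE μ T f x| ^ q
      ≤ ∑ x : Fin d → Ω, μ x * projE μ T (fun y => |f y| ^ q) x :=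
        Finset.sum_le_sum fun x _ =>
          mul_le_mul_of_nonneg_left (projE_jensen hμ0 hq f x) (hμ0 x)
    _ = ∑ x : Fin d → Ω, μ x * |f x| ^ q := totExp hμ0 T _


section link

variable {R : Finset (Fin d)} {z : Fin d → Ω} {q γ : ℝ}

lemma condMeasure_eq (μ : (Fin d → Ω) → ℝ) (R : Finset (Fin d)) (z y : Fin d → Ω) :
    condMeasure μ R z y = (if ∀ i ∈ R, y i = z i then μ y else 0) / den μ R z := rfl

lemma condMeasure_nonneg (hμ0 : ∀ x, 0 ≤ μ x) (y : Fin d → Ω) :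
    0 ≤ condMeasure μ R z y := by
  rw [condMeasure_eq]
  refine div_nonneg ?_ (den_nonneg hμ0)
  split
  · exact hμ0 y
  · exact le_refl 0

lemma condMeasure_support {y : Fin d → Ω} (hy : condMeasure μ R z y ≠ 0) :
    ∀ i ∈ R, y i = z i := by
  by_contra hcon
  apply hy
  rw [condMeasure_eq, if_neg hcon, zero_div]

lemma transfer_expect (μ : (Fin d → Ω) → ℝ) (R : Finset (Fin d)) (z : Fin d → Ω)
    (h : (Fin d → Ω) → ℝ) :
    _root_.expect (condMeasure μ R z) h = projE μ R h z := by
  unfold _root_.expect condMeasure projE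
  rw [Finset.sum_div]
  refine Finset.sum_congr rfl fun y _ => ?_
  split <;> ring

lemma div_div_div_same (a b c : ℝ) (hc : c ≠ 0) : (a / c) / (b / c) = a / b := by
  by_cases hb : b = 0
  · simp [hb]
  · field_simp

lemma transfer_projE (hμ0 : ∀ x, 0 ≤ μ x) {x : Fin d → Ω} (hx : ∀ i ∈ R, x i = z i)
    (j : Fin d) (h : (Fin d → Ω) → ℝ) :
    projE (condMeasure μ R z) {j} h x = projE μ (insert j R) h x := by
  have hcond : ∀ y : Fin d → Ω,
      ((∀ i ∈ ({j} : Finset (Fin d)), y i = x i) ∧ (∀ i ∈ R, y i = z i))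
        ↔ (∀ i ∈ insert j R, y i = x i) := by
    intro y
    constructor
    · rintro ⟨h1, h2⟩ i hi
      rcases Finset.mem_insert.1 hi with rfl | hiR
      · exact h1 i (Finset.mem_singleton_self i)
      · rw [h2 i hiR, ← hx i hiR]
    · intro hh
      constructor
      · intro i hi
        rw [Finset.mem_singleton] at hi
        exact hh i (by rw [hi]; exact Finset.mem_insert_self j R)
      · intro i hi
        rw [hh i (Finset.mem_insert_of_mem hi), hx i hi]
  have hnum : (∑ y : Fin d → Ω,
        if ∀ i ∈ ({j} : Finset (Fin d)), y i = x i then condMeasure μ R z y * h y else 0)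
      = (∑ y : Fin d → Ω, if ∀ i ∈ insert j R, y i = x i then μ y * h y else 0) / den μ R z := by
    rw [Finset.sum_div]
    refine Finset.sum_congr rfl fun y _ => ?_
    rw [condMeasure_eq]
    by_cases h1 : ∀ i ∈ ({j} : Finset (Fin d)), y i = x i
    · rw [if_pos h1]
      by_cases h2 : ∀ i ∈ R, y i = z i
      · rw [if_pos h2, if_pos ((hcond y).1 ⟨h1, h2⟩)]
        ring
      · rw [if_neg h2, if_neg (fun hc => h2 ((hcond y).2 hc).2)]
        simp
    · rw [if_neg h1, if_neg (fun hc => h1 ((hcond y).2 hc).1), zero_div]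
  have hden : (∑ y : Fin d → Ω,
        if ∀ i ∈ ({j} : Finset (Fin d)), y i = x i then condMeasure μ R z y else 0)
      = (∑ y : Fin d → Ω, if ∀ i ∈ insert j R, y i = x i then μ y else 0) / den μ R z := by
    rw [Finset.sum_div]
    refine Finset.sum_congr rfl fun y _ => ?_
    rw [condMeasure_eq]
    by_cases h1 : ∀ i ∈ ({j} : Finset (Fin d)), y i = x i
    · rw [if_pos h1]
      by_cases h2 : ∀ i ∈ R, y i = z i
      · rw [if_pos h2, if_pos ((hcond y).1 ⟨h1, h2⟩)]
      · rw [if_neg h2, if_neg (fun hc => h2 ((hcond y).2 hc).2), zero_div]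
    · rw [if_neg h1, if_neg (fun hc => h1 ((hcond y).2 hc).1), zero_div]
  show (∑ y : Fin d → Ω,
        if ∀ i ∈ ({j} : Finset (Fin d)), y i = x i then condMeasure μ R z y * h y else 0) /
      (∑ y : Fin d → Ω,
        if ∀ i ∈ ({j} : Finset (Fin d)), y i = x i then condMeasure μ R z y else 0)
    = (∑ y : Fin d → Ω, if ∀ i ∈ insert j R, y i = x i then μ y * h y else 0) /
      (∑ y : Fin d → Ω, if ∀ i ∈ insert j R, y i = x i then μ y else 0)
  rcases eq_or_ne (den μ R z) 0 with hD | hD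
  · have hterm : ∀ y : Fin d → Ω, (if ∀ i ∈ R, y i = z i then μ y else 0) = 0 := by
      intro y
      have hall := (Finset.sum_eq_zero_iff_of_nonneg (fun y _ => by
        show (0:ℝ) ≤ if ∀ i ∈ R, y i = z i then μ y else 0
        split
        · exact hμ0 y
        · exact le_refl 0)).1 hD
      exact hall y (Finset.mem_univ y)
    have hden' : (∑ y : Fin d → Ω, if ∀ i ∈ insert j R, y i = x i then μ y else 0) = 0 := by
      refine Finset.sum_eq_zero fun y _ => ?_
      split_ifs with hc
      · have h2 : ∀ i ∈ R, y i = z i := ((hcond y).2 hc).2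
        have hy := hterm y
        rw [if_pos h2] at hy
        exact hy
      · rfl
    rw [hden, hden', zero_div, div_zero, div_zero]
  · rw [hnum, hden, div_div_div_same _ _ _ hD]

lemma pnormq_decomp (hμ0 : ∀ x, 0 ≤ μ x) (hq0 : 0 < q) (R : Finset (Fin d))
    (z : Fin d → Ω) (F : (Fin d → Ω) → ℝ) :
    pnorm (condMeasure μ R z) q F ^ q = projE μ R (fun y => |F y| ^ q) z := by
  unfold pnorm
  rw [← Real.rpow_mul (Finset.sum_nonneg fun y _ =>
      mul_nonneg (condMeasure_nonneg hμ0 y) (Real.rpow_nonneg (abs_nonneg _) _)),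
    one_div_mul_cancel (ne_of_gt hq0), Real.rpow_one]
  rw [show (∑ y : Fin d → Ω, condMeasure μ R z y * |F y| ^ q)
      = _root_.expect (condMeasure μ R z) (fun y => |F y| ^ q) from rfl]
  exact transfer_expect μ R z _

/-- Lifting link estimates to the global norm. -/
lemma lifting (hμ0 : ∀ x, 0 ≤ μ x) (hq : 1 < q) (R : Finset (Fin d)) {c : ℝ}
    (hc : 0 ≤ c) (h g : (Fin d → Ω) → ℝ)
    (hz : ∀ z : Fin d → Ω,
      pnorm (condMeasure μ R z) q h ≤ c * pnorm (condMeasure μ R z) q g) :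
    pnorm μ q h ≤ c * pnorm μ q g := by
  have hq0 : 0 < q := lt_trans one_pos hq
  have key : ∀ F : (Fin d → Ω) → ℝ,
      (∑ x : Fin d → Ω, μ x * |F x| ^ q)
        = ∑ x : Fin d → Ω, μ x * pnorm (condMeasure μ R x) q F ^ q := by
    intro F
    rw [← totExp hμ0 R (fun y => |F y| ^ q)]
    refine Finset.sum_congr rfl fun x _ => ?_
    rw [pnormq_decomp hμ0 hq0 R x F]
  have hgnn : ∀ x : Fin d → Ω, (0:ℝ) ≤ μ x * pnorm (condMeasure μ R x) q g ^ q :=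
    fun x => mul_nonneg (hμ0 x) (Real.rpow_nonneg
      (pnorm_nonneg _ _ _ (condMeasure_nonneg hμ0)) _)
  unfold pnorm
  rw [key h, key g]
  calc (∑ x : Fin d → Ω, μ x * pnorm (condMeasure μ R x) q h ^ q) ^ (1/q)
      ≤ (∑ x : Fin d → Ω, μ x * (c ^ q * pnorm (condMeasure μ R x) q g ^ q)) ^ (1/q) := by
        refine Real.rpow_le_rpow (Finset.sum_nonneg fun x _ =>
          mul_nonneg (hμ0 x) (Real.rpow_nonneg
            (pnorm_nonneg _ _ _ (condMeasure_nonneg hμ0)) _)) ?_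
          (le_of_lt (one_div_pos.2 hq0))
        refine Finset.sum_le_sum fun x _ => mul_le_mul_of_nonneg_left ?_ (hμ0 x)
        rw [← Real.mul_rpow hc (pnorm_nonneg _ _ _ (condMeasure_nonneg hμ0))]
        exact Real.rpow_le_rpow (pnorm_nonneg _ _ _ (condMeasure_nonneg hμ0))
          (hz x) (le_of_lt hq0)
    _ = c * (∑ x : Fin d → Ω, μ x * pnorm (condMeasure μ R x) q g ^ q) ^ (1/q) := by
        have e1 : (∑ x : Fin d → Ω, μ x * (c ^ q * pnorm (condMeasure μ R x) q g ^ q))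
            = c ^ q * ∑ x : Fin d → Ω, μ x * pnorm (condMeasure μ R x) q g ^ q := by
          rw [Finset.mul_sum]
          exact Finset.sum_congr rfl fun x _ => by ring
        rw [e1, Real.mul_rpow (Real.rpow_nonneg hc q) (Finset.sum_nonneg fun x _ => hgnn x),
          ← Real.rpow_mul hc, mul_one_div_cancel (ne_of_gt hq0), Real.rpow_one]

end link


section pnorm2

variable {q : ℝ}

lemma pnorm_neg {α : Type} [Fintype α] (μ : α → ℝ) (q : ℝ) (f : α → ℝ) :
    pnorm μ q (fun x => -f x) = pnorm μ q f := by
  unfold pnorm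
  congr 1
  refine Finset.sum_congr rfl fun x _ => ?_
  rw [abs_neg]

lemma pnorm_sub_le {α : Type} [Fintype α] (μ : α → ℝ) (hμ0 : ∀ x, 0 ≤ μ x)
    (hq : 1 ≤ q) (f g : α → ℝ) :
    pnorm μ q (fun x => f x - g x) ≤ pnorm μ q f + pnorm μ q g := by
  have h1 := pnorm_add_le μ hμ0 hq f (fun x => -g x)
  rw [pnorm_neg] at h1
  refine le_trans (le_of_eq ?_) h1
  congr 1

end pnorm2

section core

variable {q γ : ℝ}

/-- The key one-step estimate from the `(q,γ)`-product hypothesis, lifted from links. -/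
lemma LT (hμ0 : ∀ x, 0 ≤ μ x) (hq : 1 < q) (hγ : 0 ≤ γ)
    (hX : IsQGammaProduct μ q γ) {R : Finset (Fin d)} {i j : Fin d}
    (hi : i ∉ R) (hj : j ∉ R) (hij : i ≠ j) (hcard : R.card + 2 ≤ d)
    {δ : (Fin d → Ω) → ℝ} (hδm : Meas (insert i R) δ)
    (hδ0 : ∀ z, projE μ R δ z = 0) :
    pnorm μ q (projE μ (insert j R) δ) ≤ γ * pnorm μ q δ := by
  refine lifting hμ0 hq R hγ _ _ (fun z => ?_)
  set δt : (Fin d → Ω) → ℝ := fun y => δ (fun t => if t = i then y i else z t) with hδt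
  have hmeas1 : ∀ a b : Fin d → Ω, a i = b i → δt a = δt b := by
    intro a b hab
    simp only [hδt]
    congr 1
    funext t
    by_cases ht : t = i
    · rw [if_pos ht, if_pos ht]
      exact hab
    · rw [if_neg ht, if_neg ht]
  have hae : ∀ y : Fin d → Ω, condMeasure μ R z y ≠ 0 → δt y = δ y := by
    intro y hy
    have hyR := condMeasure_support hy
    refine hδm _ y (fun t ht => ?_)
    rcases Finset.mem_insert.1 ht with rfl | htR
    · rw [if_pos rfl]
    · have hti : t ≠ i := fun hcon => hi (hcon ▸ htR)
      rw [if_neg hti]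
      exact (hyR t htR).symm
  have hXz := hX R z hcard i j hi hj hij δt hmeas1
  have e2 : pnorm (condMeasure μ R z) q δt = pnorm (condMeasure μ R z) q δ :=
    pnorm_congr_ae (fun y hy => hae y hy)
  have e1 : pnorm (condMeasure μ R z) q (projE μ (insert j R) δ)
      = pnorm (condMeasure μ R z) q
          (fun x => projE (condMeasure μ R z) {j} δt x
            - _root_.expect (condMeasure μ R z) δt) := by
    refine pnorm_congr_ae (fun x hx => ?_)
    have hxR := condMeasure_support hx
    have eA : projE (condMeasure μ R z) {j} δt x = projE (condMeasure μ R z) {j} δ x :=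
      projE_congr_ae (fun y hy => hae y hy)
    have eC : _root_.expect (condMeasure μ R z) δt
        = _root_.expect (condMeasure μ R z) δ := by
      unfold _root_.expect
      refine Finset.sum_congr rfl fun y _ => ?_
      rcases eq_or_ne (condMeasure μ R z y) 0 with h0 | h0
      · rw [h0, zero_mul, zero_mul]
      · rw [hae y h0]
    rw [eA, eC, transfer_expect, hδ0 z, sub_zero, transfer_projE hμ0 hxR j δ]
  rw [e1, ← e2]
  exact hXz

/-- single-coordinate conditioning step: `‖E_{R∪{j}} δ − E_R δ‖ ≤ 2γ‖δ‖`
for `δ` depending only on `R ∪ {b}`. -/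
lemma M1 (hμ0 : ∀ x, 0 ≤ μ x) (hq : 1 < q) (hγ : 0 ≤ γ)
    (hX : IsQGammaProduct μ q γ) {R : Finset (Fin d)} {b j : Fin d}
    (hb : b ∉ R) (hj : j ∉ R) (hbj : b ≠ j) (hcard : R.card + 2 ≤ d)
    {δ : (Fin d → Ω) → ℝ} (hδm : Meas (insert b R) δ) :
    pnorm μ q (fun x => projE μ (insert j R) δ x - projE μ R δ x)
      ≤ 2 * γ * pnorm μ q δ := by
  have hq1 : (1:ℝ) ≤ q := le_of_lt hq
  have hhm : Meas R (projE μ R δ) := projE_meas μ R δ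
  have hδ'm : Meas (insert b R) (fun y => δ y - projE μ R δ y) := by
    intro x y hxy
    dsimp only
    rw [hδm x y hxy, hhm x y (fun t ht => hxy t (Finset.mem_insert_of_mem ht))]
  have hδ'0 : ∀ z, projE μ R (fun y => δ y - projE μ R δ y) z = 0 := by
    intro z
    rw [projE_sub, tower hμ0 (le_refl R) δ z, sub_self]
  have hkey : ∀ x, μ x ≠ 0 → projE μ (insert j R) δ x - projE μ R δ x
      = projE μ (insert j R) (fun y => δ y - projE μ R δ y) x := by
    intro x hx
    rw [projE_sub, projE_self (hhm.mono (Finset.subset_insert j R))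
      (ne_of_gt (den_pos hμ0 hx))]
  calc pnorm μ q (fun x => projE μ (insert j R) δ x - projE μ R δ x)
      = pnorm μ q (projE μ (insert j R) (fun y => δ y - projE μ R δ y)) :=
        pnorm_congr_ae hkey
    _ ≤ γ * pnorm μ q (fun y => δ y - projE μ R δ y) :=
        LT hμ0 hq hγ hX hb hj hbj hcard hδ'm hδ'0
    _ ≤ 2 * γ * pnorm μ q δ := by
        have h1 : pnorm μ q (fun y => δ y - projE μ R δ y)
            ≤ pnorm μ q δ + pnorm μ q (projE μ R δ) :=
          pnorm_sub_le μ hμ0 hq1 δ (projE μ R δ)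
        have h2 := projE_contraction hμ0 hq1 R δ
        have h3 : pnorm μ q (fun y => δ y - projE μ R δ y) ≤ 2 * pnorm μ q δ := by
          linarith
        calc γ * pnorm μ q (fun y => δ y - projE μ R δ y) ≤ γ * (2 * pnorm μ q δ) :=
              mul_le_mul_of_nonneg_left h3 hγ
          _ = 2 * γ * pnorm μ q δ := by ring

/-- telescoping over `W \ A`: `‖E_W δ‖ ≤ 2nγ‖δ‖` when `E_A δ = 0` and `δ`
depends only on `A ∪ {b}` with `b ∉ W`. -/
lemma chain (hμ0 : ∀ x, 0 ≤ μ x) (hq : 1 < q) (hγ : 0 ≤ γ)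
    (hX : IsQGammaProduct μ q γ) {b : Fin d} {A : Finset (Fin d)}
    {δ : (Fin d → Ω) → ℝ} (hδm : Meas (insert b A) δ)
    (hδ0 : ∀ z, projE μ A δ z = 0) :
    ∀ (n : ℕ) (W : Finset (Fin d)), A ⊆ W → b ∉ W → W.card = A.card + n →
    pnorm μ q (projE μ W δ) ≤ 2 * n * γ * pnorm μ q δ := by
  have hq1 : (1:ℝ) ≤ q := le_of_lt hq
  have hq0 : q ≠ 0 := ne_of_gt (lt_trans one_pos hq)
  intro n
  induction n with
  | zero =>
      intro W hAW hbW hcardW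
      have hWA : A = W := Finset.eq_of_subset_of_card_le hAW (le_of_eq hcardW)
      rw [← hWA]
      have h0 : pnorm μ q (projE μ A δ) = 0 := pnorm_ae_zero hq0 (fun x _ => hδ0 x)
      rw [h0]
      push_cast
      simp
  | succ n ih =>
      intro W hAW hbW hcardW
      have hssub : A ⊂ W := by
        refine Finset.ssubset_iff_subset_ne.2 ⟨hAW, fun hc => ?_⟩
        rw [hc] at hcardW
        omega
      obtain ⟨w, hwW, hwA⟩ := Finset.exists_of_ssubset hssub
      have hW'sub : A ⊆ W.erase w :=
        fun a ha => Finset.mem_erase.2 ⟨fun hc => hwA (hc ▸ ha), hAW ha⟩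
      have hbW' : b ∉ W.erase w := fun hc => hbW (Finset.mem_of_mem_erase hc)
      have hcard' : (W.erase w).card = A.card + n := by
        rw [Finset.card_erase_of_mem hwW, hcardW]
        omega
      have hwW' : w ∉ W.erase w := Finset.notMem_erase w W
      have hbw : b ≠ w := fun hc => hbW (hc ▸ hwW)
      have hcardR : (W.erase w).card + 2 ≤ d := by
        have h1 : W ⊆ Finset.univ.erase b := fun a ha =>
          Finset.mem_erase.2 ⟨fun hc => hbW (hc ▸ ha), Finset.mem_univ a⟩
        have h2 : W.card ≤ (Finset.univ.erase b).card := Finset.card_le_card h1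
        have h3 : (Finset.univ.erase b).card = Fintype.card (Fin d) - 1 := by
          rw [Finset.card_erase_of_mem (Finset.mem_univ b), Finset.card_univ]
        rw [Fintype.card_fin] at h3
        have h4 : 0 < d := b.pos
        rw [Finset.card_erase_of_mem hwW]
        omega
      have hδm' : Meas (insert b (W.erase w)) δ :=
        hδm.mono (Finset.insert_subset_insert b hW'sub)
      have hWW' : W = insert w (W.erase w) := (Finset.insert_erase hwW).symm
      have hM1 : pnorm μ q (fun x => projE μ W δ x - projE μ (W.erase w) δ x)
          ≤ 2 * γ * pnorm μ q δ := by
        have hM1' := M1 hμ0 hq hγ hX hbW' hwW' hbw hcardR hδm'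
        rw [← hWW'] at hM1'
        exact hM1'
      calc pnorm μ q (projE μ W δ)
          ≤ pnorm μ q (fun x => projE μ W δ x - projE μ (W.erase w) δ x)
            + pnorm μ q (projE μ (W.erase w) δ) := by
            refine le_trans (le_of_eq ?_)
              (pnorm_add_le μ hμ0 hq1
                (fun x => projE μ W δ x - projE μ (W.erase w) δ x)
                (projE μ (W.erase w) δ))
            congr 1
            funext x
            ring
        _ ≤ 2 * γ * pnorm μ q δ + 2 * n * γ * pnorm μ q δ :=
            add_le_add hM1 (ih (W.erase w) hW'sub hbW' hcard')
        _ = 2 * (n + 1 : ℕ) * γ * pnorm μ q δ := by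
            push_cast
            ring

end core


section core2

variable {q γ : ℝ}

/-- `‖E_{[d]∖{i}} E_{T'} f − E_{T'∖{i}} f‖_q ≤ 4(d−1)γ‖f‖_q`. -/
lemma M2 (hμ0 : ∀ x, 0 ≤ μ x) (hq : 1 < q) (hγ : 0 ≤ γ)
    (hX : IsQGammaProduct μ q γ) {T' : Finset (Fin d)} {i : Fin d} (hiT : i ∈ T')
    (f : (Fin d → Ω) → ℝ) :
    pnorm μ q (fun x => projE μ (Finset.univ.erase i) (projE μ T' f) x
        - projE μ (T'.erase i) f x)
      ≤ 4 * ((d:ℝ) - 1) * γ * pnorm μ q f := by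
  have hq1 : (1:ℝ) ≤ q := le_of_lt hq
  have hgm : Meas T' (projE μ T' f) := projE_meas μ T' f
  have hhm : Meas (T'.erase i) (projE μ (T'.erase i) (projE μ T' f)) :=
    projE_meas μ (T'.erase i) (projE μ T' f)
  have hAT' : T'.erase i ⊆ T' := Finset.erase_subset i T'
  -- δ := g − E_A g with g = E_{T'} f, A = T'.erase i
  have hδm : Meas (insert i (T'.erase i))
      (fun y => projE μ T' f y - projE μ (T'.erase i) (projE μ T' f) y) := by
    intro x y hxy
    have hxy' : ∀ t ∈ T', x t = y t := by
      intro t ht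
      exact hxy t (by rw [Finset.insert_erase hiT]; exact ht)
    dsimp only
    rw [hgm x y hxy', hhm x y (fun t ht => hxy' t (hAT' ht))]
  have hδ0 : ∀ z, projE μ (T'.erase i)
      (fun y => projE μ T' f y - projE μ (T'.erase i) (projE μ T' f) y) z = 0 := by
    intro z
    rw [projE_sub, tower hμ0 (le_refl (T'.erase i)) (projE μ T' f) z, sub_self]
  -- the target function agrees a.e. with `E_W δ`, `W = univ.erase i`
  have hAW : T'.erase i ⊆ Finset.univ.erase i :=
    Finset.erase_subset_erase i (Finset.subset_univ T')
  have hbW : i ∉ Finset.univ.erase i := Finset.notMem_erase i Finset.univ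
  have hae : ∀ x, μ x ≠ 0 →
      projE μ (Finset.univ.erase i) (projE μ T' f) x - projE μ (T'.erase i) f x
      = projE μ (Finset.univ.erase i)
          (fun y => projE μ T' f y - projE μ (T'.erase i) (projE μ T' f) y) x := by
    intro x hx
    rw [projE_sub,
      projE_self (hhm.mono hAW) (ne_of_gt (den_pos hμ0 hx)),
      tower hμ0 hAT' f x]
  -- cardinalities
  have hd : 0 < d := i.pos
  have hcardW : (Finset.univ.erase i).card
      = (T'.erase i).card + ((Finset.univ.erase i).card - (T'.erase i).card) := by
    have := Finset.card_le_card hAW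
    omega
  have hn : (((Finset.univ.erase i).card - (T'.erase i).card : ℕ) : ℝ) ≤ (d:ℝ) - 1 := by
    have h1 : (Finset.univ.erase i).card = d - 1 := by
      rw [Finset.card_erase_of_mem (Finset.mem_univ i), Finset.card_univ, Fintype.card_fin]
    have h3 : ((Finset.univ.erase i).card - (T'.erase i).card : ℕ) + 1 ≤ d := by omega
    have h4 := (Nat.cast_le (α := ℝ)).2 h3
    push_cast at h4
    linarith
  have hchain := chain hμ0 hq hγ hX hδm hδ0
    ((Finset.univ.erase i).card - (T'.erase i).card) (Finset.univ.erase i) hAW hbW hcardW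
  -- ‖δ‖ ≤ 2‖f‖
  have hδnorm : pnorm μ q (fun y => projE μ T' f y - projE μ (T'.erase i) (projE μ T' f) y)
      ≤ 2 * pnorm μ q f := by
    have h1 := pnorm_sub_le μ hμ0 hq1 (projE μ T' f)
      (projE μ (T'.erase i) (projE μ T' f))
    have h2 := projE_contraction hμ0 hq1 T' f
    have h3 := projE_contraction hμ0 hq1 (T'.erase i) (projE μ T' f)
    linarith
  have hpf : 0 ≤ pnorm μ q f := pnorm_nonneg μ q f hμ0
  calc pnorm μ q (fun x => projE μ (Finset.univ.erase i) (projE μ T' f) x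
          - projE μ (T'.erase i) f x)
      = pnorm μ q (projE μ (Finset.univ.erase i)
          (fun y => projE μ T' f y - projE μ (T'.erase i) (projE μ T' f) y)) :=
        pnorm_congr_ae hae
    _ ≤ 2 * ((Finset.univ.erase i).card - (T'.erase i).card : ℕ) * γ
          * pnorm μ q (fun y => projE μ T' f y - projE μ (T'.erase i) (projE μ T' f) y) :=
        hchain
    _ ≤ 4 * ((d:ℝ) - 1) * γ * pnorm μ q f := by
        have hnn : (0:ℝ) ≤ 2 * ((Finset.univ.erase i).card - (T'.erase i).card : ℕ) * γ := by
          positivity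
        have step := mul_le_mul_of_nonneg_left hδnorm hnn
        refine le_trans step ?_
        have hγp : 0 ≤ γ * pnorm μ q f := mul_nonneg hγ hpf
        nlinarith [hn, hγp, hγ, hpf,
          mul_le_mul_of_nonneg_right hn (mul_nonneg hγ hpf)]

/-- Telescoping: the ordered composition of the `E_{[d]∖{i}}` is close to `E_S`. -/
lemma lemT (hμ0 : ∀ x, 0 ≤ μ x) (hq : 1 < q) (hγ : 0 ≤ γ)
    (hX : IsQGammaProduct μ q γ) (f : (Fin d → Ω) → ℝ) :
    ∀ l : List (Fin d), l.Nodup →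
    pnorm μ q (fun x =>
        (l.foldr (fun i g => projE μ (Finset.univ.erase i) g) f) x
          - projE μ (Finset.univ \ l.toFinset) f x)
      ≤ (l.length : ℝ) * (4 * ((d:ℝ) - 1) * γ) * pnorm μ q f := by
  have hq1 : (1:ℝ) ≤ q := le_of_lt hq
  have hq0 : q ≠ 0 := ne_of_gt (lt_trans one_pos hq)
  intro l
  induction l with
  | nil =>
      intro _
      simp only [List.foldr_nil, List.toFinset_nil, Finset.sdiff_empty, List.length_nil]
      have h0 : pnorm μ q (fun x => f x - projE μ Finset.univ f x) = 0 := by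
        refine pnorm_ae_zero hq0 (fun x hx => ?_)
        rw [projE_self (fun a b hab => by
            rw [show a = b from funext fun t => hab t (Finset.mem_univ t)])
          (ne_of_gt (den_pos hμ0 hx)), sub_self]
      rw [h0]
      simp
  | cons i l' ih =>
      intro hnd
      have hnd' : l'.Nodup := (List.nodup_cons.1 hnd).2
      have hil' : i ∉ l' := (List.nodup_cons.1 hnd).1
      have hiT' : i ∈ Finset.univ \ l'.toFinset :=
        Finset.mem_sdiff.2 ⟨Finset.mem_univ i, fun hc => hil' (List.mem_toFinset.1 hc)⟩
      have hTtarget : Finset.univ \ (i :: l').toFinset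
          = (Finset.univ \ l'.toFinset).erase i := by
        ext a
        simp only [List.toFinset_cons, Finset.mem_sdiff, Finset.mem_erase,
          Finset.mem_insert, Finset.mem_univ, true_and]
        tauto
      have hstep1 : pnorm μ q (fun x =>
          (List.foldr (fun i g => projE μ (Finset.univ.erase i) g) f l') x
            - projE μ (Finset.univ \ l'.toFinset) f x)
          ≤ (l'.length : ℝ) * (4 * ((d:ℝ) - 1) * γ) * pnorm μ q f := ih hnd'
      calc pnorm μ q (fun x =>
            (List.foldr (fun i g => projE μ (Finset.univ.erase i) g) f (i :: l')) x
              - projE μ (Finset.univ \ (i :: l').toFinset) f x)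
          = pnorm μ q (fun x =>
              projE μ (Finset.univ.erase i)
                (List.foldr (fun i g => projE μ (Finset.univ.erase i) g) f l') x
              - projE μ ((Finset.univ \ l'.toFinset).erase i) f x) := by
            rw [hTtarget]
            rfl
        _ ≤ pnorm μ q (fun x =>
              projE μ (Finset.univ.erase i)
                (List.foldr (fun i g => projE μ (Finset.univ.erase i) g) f l') x
              - projE μ (Finset.univ.erase i) (projE μ (Finset.univ \ l'.toFinset) f) x)
            + pnorm μ q (fun x =>
              projE μ (Finset.univ.erase i) (projE μ (Finset.univ \ l'.toFinset) f) x
              - projE μ ((Finset.univ \ l'.toFinset).erase i) f x) :=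
            pnorm_triangle_sub μ hμ0 hq1 _ _ _
        _ ≤ (l'.length : ℝ) * (4 * ((d:ℝ) - 1) * γ) * pnorm μ q f
            + 4 * ((d:ℝ) - 1) * γ * pnorm μ q f := by
            refine add_le_add ?_ (M2 hμ0 hq hγ hX hiT' f)
            have he : (fun x =>
                projE μ (Finset.univ.erase i)
                  (List.foldr (fun i g => projE μ (Finset.univ.erase i) g) f l') x
                - projE μ (Finset.univ.erase i) (projE μ (Finset.univ \ l'.toFinset) f) x)
                = projE μ (Finset.univ.erase i) (fun y =>
                    (List.foldr (fun i g => projE μ (Finset.univ.erase i) g) f l') y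
                    - projE μ (Finset.univ \ l'.toFinset) f y) := by
              funext x
              rw [projE_sub]
            rw [he]
            exact le_trans (projE_contraction hμ0 hq1 _ _) hstep1
        _ = ((i :: l').length : ℝ) * (4 * ((d:ℝ) - 1) * γ) * pnorm μ q f := by
            rw [List.length_cons]
            push_cast
            ring

end core2


end ND

namespace ND

variable {d : ℕ} {Ω : Type} [Fintype Ω] [DecidableEq Ω]

lemma foldr_expand (μ : (Fin d → Ω) → ℝ) (r : Fin d → ℝ) (f : (Fin d → Ω) → ℝ) :
    ∀ l : List (Fin d), l.Nodup →
    (l.foldr (fun i g => coordT μ i (r i) g) f)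
      = fun x => ∑ S ∈ l.toFinset.powerset,
          (∏ i ∈ S, r i) * (∏ i ∈ l.toFinset \ S, (1 - r i)) *
            ((l.filter (fun j => j ∉ S)).foldr
              (fun i g => projE μ (Finset.univ.erase i) g) f) x := by
  intro l
  induction l with
  | nil =>
      intro _
      funext x
      simp
  | cons i l' ih =>
      intro hnd
      have hnd' : l'.Nodup := (List.nodup_cons.1 hnd).2
      have hil' : i ∉ l' := (List.nodup_cons.1 hnd).1
      have hiT0 : i ∉ l'.toFinset := fun hc => hil' (List.mem_toFinset.1 hc)
      funext x
      rw [List.foldr_cons]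
      simp only [coordT]
      rw [ih hnd']
      simp only [projE_sum, projE_smul]
      simp only [List.toFinset_cons]
      rw [Finset.sum_powerset_insert hiT0]
      rw [Finset.mul_sum, Finset.mul_sum, ← Finset.sum_add_distrib, ← Finset.sum_add_distrib]
      refine Finset.sum_congr rfl fun S hSmem => ?_
      have hS : S ⊆ l'.toFinset := Finset.mem_powerset.1 hSmem
      have hiS : i ∉ S := fun hc => hiT0 (hS hc)
      have e1 : insert i l'.toFinset \ S = insert i (l'.toFinset \ S) := by
        ext a
        simp only [Finset.mem_sdiff, Finset.mem_insert]
        constructor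
        · rintro ⟨rfl | ha, hb⟩
          · exact Or.inl rfl
          · exact Or.inr ⟨ha, hb⟩
        · rintro (rfl | ⟨ha, hb⟩)
          · exact ⟨Or.inl rfl, hiS⟩
          · exact ⟨Or.inr ha, hb⟩
      have e2 : insert i l'.toFinset \ insert i S = l'.toFinset \ S := by
        ext a
        simp only [Finset.mem_sdiff, Finset.mem_insert, not_or]
        constructor
        · rintro ⟨rfl | ha, hne, hnS⟩
          · exact absurd rfl hne
          · exact ⟨ha, hnS⟩
        · rintro ⟨ha, hnS⟩
          exact ⟨Or.inr ha, fun he => hiT0 (he ▸ ha), hnS⟩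
      have e3 : List.filter (fun j => decide (j ∉ S)) (i :: l')
          = i :: List.filter (fun j => decide (j ∉ S)) l' :=
        List.filter_cons_of_pos (by simpa using hiS)
      have e4 : List.filter (fun j => decide (j ∉ insert i S)) (i :: l')
          = List.filter (fun j => decide (j ∉ S)) l' := by
        rw [List.filter_cons_of_neg (by simp)]
        refine List.filter_congr fun a ha => ?_
        have hai : a ≠ i := fun he => hil' (he ▸ ha)
        simp [Finset.mem_insert, hai]
      rw [e1, e2, e3, e4,
        Finset.prod_insert (show i ∉ l'.toFinset \ S from
          fun hc => hiT0 (Finset.mem_sdiff.1 hc).1),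
        Finset.prod_insert hiS, List.foldr_cons]
      ring

end ND

/-- decorrelation of the noise operator on a `(q,γ)`-product:
`‖T_r f − T^{π(1)}_{r_{π(1)}} ⋯ T^{π(d)}_{r_{π(d)}} f‖_q ≤ c_{d,r} γ ‖f‖_q`
with `c_{d,r} = d³ ∑_{S⊆[d]} |r_S ∏_{i∉S}(1−r_i)|`. -/
theorem noise_decorrelation {d : ℕ} {Ω : Type} [Fintype Ω] [DecidableEq Ω]
    (μ : (Fin d → Ω) → ℝ) (hμ0 : ∀ x, 0 ≤ μ x) (hμ1 : ∑ x, μ x = 1)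
    (q γ : ℝ) (hq : 1 < q) (hγ : 0 ≤ γ) (hX : IsQGammaProduct μ q γ)
    (r : Fin d → ℝ) (π : Equiv.Perm (Fin d)) (f : (Fin d → Ω) → ℝ) :
    pnorm μ q (fun x => noiseT μ r f x - seqT μ r π f x)
      ≤ ((d : ℝ) ^ 3 *
          ∑ S ∈ (univ : Finset (Fin d)).powerset,
            |(∏ i ∈ S, r i) * ∏ i ∈ Sᶜ, (1 - r i)|) * γ * pnorm μ q f := by
  classical
  have hq1 : (1:ℝ) ≤ q := le_of_lt hq
  have hq0 : (0:ℝ) < q := lt_trans one_pos hq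
  have hlnd : (List.ofFn fun k : Fin d => π k).Nodup := List.nodup_ofFn.2 π.injective
  have hltf : (List.ofFn fun k : Fin d => π k).toFinset = Finset.univ := by
    refine Finset.eq_univ_iff_forall.2 fun a => ?_
    rw [List.mem_toFinset, List.mem_ofFn]
    exact ⟨π.symm a, π.apply_symm_apply a⟩
  have hexp := ND.foldr_expand μ r f _ hlnd
  have perS : ∀ S ∈ (univ : Finset (Fin d)).powerset,
      pnorm μ q (fun x => projE μ S f x -
        (((List.ofFn fun k : Fin d => π k).filter (fun j => j ∉ S)).foldr
          (fun i g => projE μ (Finset.univ.erase i) g) f) x)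
      ≤ (d:ℝ)^3 * γ * pnorm μ q f := by
    intro S _
    set lS := (List.ofFn fun k : Fin d => π k).filter (fun j => j ∉ S) with hlS
    have hlSnd : lS.Nodup := hlnd.filter _
    have hsub : Finset.univ \ lS.toFinset = S := by
      have h1 : lS.toFinset = Sᶜ := by
        ext a
        rw [hlS, List.mem_toFinset, List.mem_filter]
        simp only [Finset.mem_compl]
        constructor
        · rintro ⟨-, h⟩
          simpa using h
        · intro h
          exact ⟨by rw [← List.mem_toFinset, hltf]; exact Finset.mem_univ a, by simpa using h⟩
      rw [h1, ← Finset.compl_eq_univ_sdiff, compl_compl]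
    have hT := ND.lemT hμ0 hq hγ hX f lS hlSnd
    rw [hsub] at hT
    rw [ND.pnorm_sub_comm μ q (fun x => projE μ S f x)
      (fun x => (lS.foldr (fun i g => projE μ (Finset.univ.erase i) g) f) x)]
    refine le_trans hT ?_
    have hlenN : lS.length ≤ d := by
      rw [hlS]
      exact le_trans (List.length_filter_le _ _) (le_of_eq List.length_ofFn)
    have hlen : (lS.length : ℝ) ≤ (d:ℝ) := by exact_mod_cast hlenN
    have hp := ND.pnorm_nonneg μ q f hμ0
    have hd0 : (0:ℝ) ≤ (d:ℝ) := Nat.cast_nonneg d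
    have hl0 : (0:ℝ) ≤ (lS.length : ℝ) := Nat.cast_nonneg _
    have hkey : (lS.length : ℝ) * (4 * ((d:ℝ) - 1)) ≤ (d:ℝ)^3 := by
      rcases Nat.eq_zero_or_pos d with hd | hd
      · have hL0 : lS.length = 0 := by omega
        rw [hL0, hd]
        push_cast
        norm_num
      · have hd1 : (1:ℝ) ≤ (d:ℝ) := by exact_mod_cast hd
        nlinarith [mul_nonneg hd0 (sq_nonneg ((d:ℝ) - 2)), hlen, hl0, hd1]
    calc (lS.length : ℝ) * (4 * ((d:ℝ) - 1) * γ) * pnorm μ q f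
        = ((lS.length : ℝ) * (4 * ((d:ℝ) - 1))) * (γ * pnorm μ q f) := by ring
      _ ≤ (d:ℝ)^3 * (γ * pnorm μ q f) :=
          mul_le_mul_of_nonneg_right hkey (mul_nonneg hγ hp)
      _ = (d:ℝ)^3 * γ * pnorm μ q f := by ring
  have hdiff : (fun x => noiseT μ r f x - seqT μ r π f x)
      = fun x => ∑ S ∈ (univ : Finset (Fin d)).powerset,
          ((∏ i ∈ S, r i) * ∏ i ∈ Sᶜ, (1 - r i)) *
            (projE μ S f x -
              (((List.ofFn fun k : Fin d => π k).filter (fun j => j ∉ S)).foldr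
                (fun i g => projE μ (Finset.univ.erase i) g) f) x) := by
    funext x
    rw [show seqT μ r π f
        = (List.ofFn fun k : Fin d => π k).foldr (fun i g => coordT μ i (r i) g) f from rfl,
      hexp]
    rw [show noiseT μ r f x = ∑ S ∈ (univ : Finset (Fin d)).powerset,
        (∏ i ∈ S, r i) * (∏ i ∈ Sᶜ, (1 - r i)) * projE μ S f x from rfl]
    rw [hltf]
    simp only [← Finset.compl_eq_univ_sdiff]
    rw [← Finset.sum_sub_distrib]
    refine Finset.sum_congr rfl fun S _ => ?_
    ring
  rw [hdiff]
  refine le_trans (ND.pnorm_sum_le μ hμ0 hq1 ((univ : Finset (Fin d)).powerset)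
    (fun S x => ((∏ i ∈ S, r i) * ∏ i ∈ Sᶜ, (1 - r i)) *
      (projE μ S f x -
        (((List.ofFn fun k : Fin d => π k).filter (fun j => j ∉ S)).foldr
          (fun i g => projE μ (Finset.univ.erase i) g) f) x))) ?_
  calc ∑ S ∈ (univ : Finset (Fin d)).powerset,
        pnorm μ q (fun x => ((∏ i ∈ S, r i) * ∏ i ∈ Sᶜ, (1 - r i)) *
          (projE μ S f x -
            (((List.ofFn fun k : Fin d => π k).filter (fun j => j ∉ S)).foldr
              (fun i g => projE μ (Finset.univ.erase i) g) f) x))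
      = ∑ S ∈ (univ : Finset (Fin d)).powerset,
          |(∏ i ∈ S, r i) * ∏ i ∈ Sᶜ, (1 - r i)| *
            pnorm μ q (fun x => projE μ S f x -
              (((List.ofFn fun k : Fin d => π k).filter (fun j => j ∉ S)).foldr
                (fun i g => projE μ (Finset.univ.erase i) g) f) x) :=
        Finset.sum_congr rfl fun S _ => ND.pnorm_smul μ hμ0 hq0 _ _
    _ ≤ ∑ S ∈ (univ : Finset (Fin d)).powerset,
          |(∏ i ∈ S, r i) * ∏ i ∈ Sᶜ, (1 - r i)| * ((d:ℝ)^3 * γ * pnorm μ q f) :=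
        Finset.sum_le_sum fun S hS =>
          mul_le_mul_of_nonneg_left (perS S hS) (abs_nonneg _)
    _ = ((d : ℝ) ^ 3 * ∑ S ∈ (univ : Finset (Fin d)).powerset,
          |(∏ i ∈ S, r i) * ∏ i ∈ Sᶜ, (1 - r i)|) * γ * pnorm μ q f := by
        rw [← Finset.sum_mul]
        ring
end

section
/- Single-coordinate symmetrization on a partite complex: for X a d-partite complex, f : X(d) → ℝ, coordinate i ∈ [d], and q > 1, ‖T^i_{1/2} f‖_q ≤ ‖T^i_r f‖_{q}, where r is a uniform ±1 random bit (the norm on the right also averages over r). -/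
open Finset BigOperators

section aux
variable {d : ℕ} {Ω : Type} [Fintype Ω] [DecidableEq Ω]

lemma class_sum_congr (T : Finset (Fin d)) (g : (Fin d → Ω) → ℝ)
    {x y : Fin d → Ω} (h : ∀ j ∈ T, y j = x j) :
    (∑ z : Fin d → Ω, if ∀ i ∈ T, z i = y i then g z else 0)
      = ∑ z : Fin d → Ω, if ∀ i ∈ T, z i = x i then g z else 0 :=
  Finset.sum_congr rfl fun z _ => if_congr
    ⟨fun hz j hj => (hz j hj).trans (h j hj), fun hz j hj => (hz j hj).trans (h j hj).symm⟩ rfl rfl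

lemma projE_eq_on (μ : (Fin d → Ω) → ℝ) (T : Finset (Fin d)) (f : (Fin d → Ω) → ℝ)
    {x y : Fin d → Ω} (h : ∀ j ∈ T, y j = x j) : projE μ T f y = projE μ T f x := by
  unfold projE; rw [class_sum_congr T _ h, class_sum_congr T _ h]

lemma mu_eq_zero (μ : (Fin d → Ω) → ℝ) (hμ0 : ∀ x, 0 ≤ μ x) (T : Finset (Fin d))
    (x : Fin d → Ω) (hD : (∑ y : Fin d → Ω, if ∀ i ∈ T, y i = x i then μ y else 0) = 0)
    {y : Fin d → Ω} (h : ∀ i ∈ T, y i = x i) : μ y = 0 := by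
  have h0 : ∀ z ∈ (univ : Finset (Fin d → Ω)),
      (0:ℝ) ≤ if ∀ i ∈ T, z i = x i then μ z else 0 := by
    intro z _; split_ifs; exacts [hμ0 z, le_refl 0]
  have h2 := (Finset.sum_eq_zero_iff_of_nonneg h0).mp hD y (mem_univ y)
  rwa [if_pos h] at h2

lemma projE_idem (μ : (Fin d → Ω) → ℝ) (T : Finset (Fin d)) (f : (Fin d → Ω) → ℝ)
    (x : Fin d → Ω) : projE μ T (projE μ T f) x = projE μ T f x := by
  by_cases hD : (∑ y : Fin d → Ω, if ∀ i ∈ T, y i = x i then μ y else 0) = 0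
  · unfold projE
    rw [hD, div_zero, div_zero]
  · have hnum : (∑ y : Fin d → Ω, if ∀ i ∈ T, y i = x i then μ y * projE μ T f y else 0)
        = (∑ y : Fin d → Ω, if ∀ i ∈ T, y i = x i then μ y else 0) * projE μ T f x := by
      rw [Finset.sum_mul]
      refine Finset.sum_congr rfl fun z _ => ?_
      split_ifs with h
      · rw [projE_eq_on μ T f h]
      · simp
    show (∑ y : Fin d → Ω, if ∀ i ∈ T, y i = x i then μ y * projE μ T f y else 0) /
        (∑ y : Fin d → Ω, if ∀ i ∈ T, y i = x i then μ y else 0) = projE μ T f x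
    rw [hnum, mul_comm, mul_div_assoc, div_self hD, mul_one]

lemma projE_linear (μ : (Fin d → Ω) → ℝ) (T : Finset (Fin d)) (f g : (Fin d → Ω) → ℝ)
    (x : Fin d → Ω) (a b : ℝ) :
    projE μ T (fun z => a * f z + b * g z) x = a * projE μ T f x + b * projE μ T g x := by
  unfold projE
  rw [← mul_div_assoc, ← mul_div_assoc, ← add_div]
  congr 1
  rw [Finset.mul_sum, Finset.mul_sum, ← Finset.sum_add_distrib]
  exact Finset.sum_congr rfl fun z _ => by split_ifs <;> ring

lemma projE_coordT_neg (μ : (Fin d → Ω) → ℝ) (f : (Fin d → Ω) → ℝ) (i : Fin d)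
    (x : Fin d → Ω) :
    projE μ (univ.erase i) (coordT μ i (-1) f) x = projE μ (univ.erase i) f x := by
  have h : coordT μ i (-1) f
      = fun z => (-1 : ℝ) * f z + (1 - (-1)) * projE μ (univ.erase i) f z := rfl
  rw [h, projE_linear, projE_idem]
  ring

lemma projE_jensen (μ : (Fin d → Ω) → ℝ) (hμ0 : ∀ x, 0 ≤ μ x) (T : Finset (Fin d))
    (g : (Fin d → Ω) → ℝ) (x : Fin d → Ω) {q : ℝ} (hq : 1 ≤ q) :
    |projE μ T g x| ^ q ≤ projE μ T (fun z => |g z| ^ q) x := by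
  unfold projE
  by_cases hD : (∑ y : Fin d → Ω, if ∀ i ∈ T, y i = x i then μ y else 0) = 0
  · have hnum : (∑ y : Fin d → Ω, if ∀ i ∈ T, y i = x i then μ y * g y else 0) = 0 := by
      refine Finset.sum_eq_zero fun z _ => ?_
      split_ifs with h
      · rw [mu_eq_zero μ hμ0 T x hD h, zero_mul]
      · rfl
    rw [hnum, hD, zero_div, div_zero, abs_zero, Real.zero_rpow (by linarith)]
  · have hDpos : 0 < (∑ y : Fin d → Ω, if ∀ i ∈ T, y i = x i then μ y else 0) := by
      refine lt_of_le_of_ne (Finset.sum_nonneg fun z _ => ?_) (Ne.symm hD)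
      split_ifs; exacts [hμ0 z, le_refl 0]
    set D := ∑ y : Fin d → Ω, if ∀ i ∈ T, y i = x i then μ y else 0 with hDdef
    have hsum : ∀ k : (Fin d → Ω) → ℝ,
        (∑ y : Fin d → Ω, (if ∀ i ∈ T, y i = x i then μ y else 0) / D * k y)
          = (∑ y : Fin d → Ω, if ∀ i ∈ T, y i = x i then μ y * k y else 0) / D := by
      intro k
      rw [Finset.sum_div]
      exact Finset.sum_congr rfl fun z _ => by split_ifs <;> ring
    have key := Real.rpow_arith_mean_le_arith_mean_rpow Finset.univ
        (fun y => (if ∀ i ∈ T, y i = x i then μ y else 0) / D)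
        (fun y => |g y|)
        (fun y _ => div_nonneg (by split_ifs; exacts [hμ0 y, le_refl 0]) hDpos.le)
        (by rw [← Finset.sum_div]; exact div_self hD)
        (fun y _ => abs_nonneg _) hq
    rw [hsum (fun y => |g y|), hsum (fun y => |g y| ^ q)] at key
    refine le_trans ?_ key
    apply Real.rpow_le_rpow (abs_nonneg _) ?_ (by linarith)
    rw [abs_div, abs_of_pos hDpos]
    gcongr
    refine (Finset.abs_sum_le_sum_abs _ _).trans (Finset.sum_le_sum fun z _ => ?_)
    split_ifs with h
    · rw [abs_mul, abs_of_nonneg (hμ0 z)]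
    · simp

lemma projE_tower (μ : (Fin d → Ω) → ℝ) (hμ0 : ∀ x, 0 ≤ μ x) (T : Finset (Fin d))
    (h : (Fin d → Ω) → ℝ) :
    ∑ x : Fin d → Ω, μ x * projE μ T h x = ∑ x : Fin d → Ω, μ x * h x := by
  unfold projE
  have step : ∀ x : Fin d → Ω,
      μ x * ((∑ y : Fin d → Ω, if ∀ i ∈ T, y i = x i then μ y * h y else 0)
        / (∑ y : Fin d → Ω, if ∀ i ∈ T, y i = x i then μ y else 0))
      = ∑ y : Fin d → Ω, if ∀ i ∈ T, y i = x i then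
          μ x / (∑ z : Fin d → Ω, if ∀ i ∈ T, z i = x i then μ z else 0) * (μ y * h y)
        else 0 := by
    intro x
    rw [show μ x * ((∑ y : Fin d → Ω, if ∀ i ∈ T, y i = x i then μ y * h y else 0)
        / (∑ y : Fin d → Ω, if ∀ i ∈ T, y i = x i then μ y else 0))
      = (μ x / (∑ z : Fin d → Ω, if ∀ i ∈ T, z i = x i then μ z else 0))
        * (∑ y : Fin d → Ω, if ∀ i ∈ T, y i = x i then μ y * h y else 0) by ring]
    rw [Finset.mul_sum]
    exact Finset.sum_congr rfl fun z _ => by split_ifs <;> simp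
  rw [Finset.sum_congr rfl fun x _ => step x, Finset.sum_comm]
  refine Finset.sum_congr rfl fun y _ => ?_
  by_cases hDy : (∑ z : Fin d → Ω, if ∀ i ∈ T, z i = y i then μ z else 0) = 0
  · have hy : μ y = 0 := mu_eq_zero μ hμ0 T y hDy (fun i _ => rfl)
    simp [hy]
  · have key : ∀ x : Fin d → Ω,
        (if ∀ i ∈ T, y i = x i then
          μ x / (∑ z : Fin d → Ω, if ∀ i ∈ T, z i = x i then μ z else 0) * (μ y * h y)
        else 0)
        = (if ∀ i ∈ T, x i = y i then μ x else 0)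
          / (∑ z : Fin d → Ω, if ∀ i ∈ T, z i = y i then μ z else 0) * (μ y * h y) := by
      intro x
      split_ifs with h1 h2 h3
      · rw [← class_sum_congr T μ h1]
      · exact absurd (fun i hi => (h1 i hi).symm) h2
      · exact absurd (fun i hi => (h3 i hi).symm) h1
      · simp
    rw [Finset.sum_congr rfl fun x _ => key x, ← Finset.sum_mul, ← Finset.sum_div,
      div_self hDy, one_mul]

lemma half_convex (a b : ℝ) {q : ℝ} (hq : 1 ≤ q) :
    |(1/2 : ℝ) * a + (1/2 : ℝ) * b| ^ q ≤ (1/2) * |a| ^ q + (1/2) * |b| ^ q := by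
  have hcv := (convexOn_rpow hq).2 (Set.mem_Ici.mpr (abs_nonneg a))
    (Set.mem_Ici.mpr (abs_nonneg b)) (by norm_num : (0:ℝ) ≤ 1/2)
    (by norm_num : (0:ℝ) ≤ 1/2) (by norm_num : (1/2 : ℝ) + 1/2 = 1)
  simp only [smul_eq_mul] at hcv
  refine le_trans ?_ hcv
  apply Real.rpow_le_rpow (abs_nonneg _) ?_ (by linarith)
  calc |(1/2:ℝ)*a + (1/2:ℝ)*b| ≤ |(1/2:ℝ)*a| + |(1/2:ℝ)*b| := abs_add_le _ _
    _ = (1/2)*|a| + (1/2)*|b| := by rw [abs_mul, abs_mul, abs_of_nonneg (by norm_num : (0:ℝ) ≤ 1/2)]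

end aux

/-- single-coordinate symmetrization:
`‖T^i_{1/2} f‖_q ≤ ‖T^i_r f‖_q` where `r` is a uniform `±1` bit and the norm on
the right also averages over `r`. -/
theorem single_coordinate_symmetrization {d : ℕ} {Ω : Type} [Fintype Ω] [DecidableEq Ω]
    (μ : (Fin d → Ω) → ℝ) (hμ0 : ∀ x, 0 ≤ μ x) (hμ1 : ∑ x, μ x = 1)
    (f : (Fin d → Ω) → ℝ) (i : Fin d) (q : ℝ) (hq : 1 < q) :
    pnorm μ q (coordT μ i (1 / 2) f)
      ≤ ((1 / 2) * ∑ x, μ x * |coordT μ i 1 f x| ^ q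
         + (1 / 2) * ∑ x, μ x * |coordT μ i (-1) f x| ^ q) ^ (1 / q) := by
  have hq1 : (1:ℝ) ≤ q := hq.le
  set T := (univ.erase i) with hT
  have hhalf : ∀ x, μ x * |coordT μ i (1/2) f x| ^ q
      ≤ μ x * ((1/2) * |f x| ^ q + (1/2) * |projE μ T f x| ^ q) := by
    intro x
    refine mul_le_mul_of_nonneg_left ?_ (hμ0 x)
    have hc : coordT μ i (1/2) f x = (1/2 : ℝ) * f x + (1/2 : ℝ) * projE μ T f x := by
      unfold coordT; norm_num; rfl
    rw [hc]
    exact half_convex _ _ hq1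
  have h1 : ∀ x, coordT μ i 1 f x = f x := by intro x; simp [coordT]
  have hEle : ∑ x, μ x * |projE μ T f x| ^ q
      ≤ ∑ x, μ x * |coordT μ i (-1) f x| ^ q := by
    calc ∑ x, μ x * |projE μ T f x| ^ q
        ≤ ∑ x, μ x * projE μ T (fun z => |coordT μ i (-1) f z| ^ q) x := by
          refine Finset.sum_le_sum fun x _ => mul_le_mul_of_nonneg_left ?_ (hμ0 x)
          rw [← projE_coordT_neg μ f i x]
          exact projE_jensen μ hμ0 T _ x hq1
      _ = ∑ x, μ x * |coordT μ i (-1) f x| ^ q := projE_tower μ hμ0 T _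
  have hmain : ∑ x, μ x * |coordT μ i (1/2) f x| ^ q
      ≤ (1/2) * ∑ x, μ x * |coordT μ i 1 f x| ^ q
        + (1/2) * ∑ x, μ x * |coordT μ i (-1) f x| ^ q := by
    calc ∑ x, μ x * |coordT μ i (1/2) f x| ^ q
        ≤ ∑ x, μ x * ((1/2) * |f x| ^ q + (1/2) * |projE μ T f x| ^ q) :=
          Finset.sum_le_sum fun x _ => hhalf x
      _ = (1/2) * ∑ x, μ x * |f x| ^ q + (1/2) * ∑ x, μ x * |projE μ T f x| ^ q := by
          rw [Finset.mul_sum, Finset.mul_sum, ← Finset.sum_add_distrib]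
          exact Finset.sum_congr rfl fun x _ => by ring
      _ ≤ (1/2) * ∑ x, μ x * |coordT μ i 1 f x| ^ q
          + (1/2) * ∑ x, μ x * |coordT μ i (-1) f x| ^ q := by
          have he : ∑ x, μ x * |f x| ^ q = ∑ x, μ x * |coordT μ i 1 f x| ^ q :=
            Finset.sum_congr rfl fun x _ => by rw [h1 x]
          rw [he]
          have h2 : (0:ℝ) ≤ 1/2 := by norm_num
          linarith [mul_le_mul_of_nonneg_left hEle h2]
  unfold pnorm
  apply Real.rpow_le_rpow ?_ hmain (by positivity)
  exact Finset.sum_nonneg fun x _ =>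
    mul_nonneg (hμ0 x) (Real.rpow_nonneg (abs_nonneg _) q)
end
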